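/- Let (a_m)_{m≥0} be a sequence of integers with a₀ ≥ 0 and a_m ≥ 1 for m ≥ 1, and suppose (a_m) is eventually periodic. Define q₋₁ = 0, q₀ = 1, q_m = a_m·q_{m−1} + q_{m−2} for m ≥ 1, and N_m = a₀ + a₁ + ⋯ + a_m. Then the limit lim_{m→∞} (log q_m)/N_m exists. -/

import Mathlib

/-- Denominators of the convergents, shifted by one: `qConv a (m+1) = q_m`, with
`q₋₁ = 0`, `q₀ = 1`, `q_m = a_m q_{m-1} + q_{m-2}`. -/
def qConv (a : ℕ → ℤ) : ℕ → ℤ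
  | 0 => 0
  | 1 => 1
  | n + 2 => a (n + 1) * qConv a (n + 1) + qConv a n

/-- `N_m = a₀ + a₁ + ⋯ + a_m`. -/
def Nsum (a : ℕ → ℤ) (m : ℕ) : ℤ := ∑ i ∈ Finset.range (m + 1), a i

open Matrix Filter Real

section Aux

noncomputable def lamv (t : ℝ) : ℝ := (t + Real.sqrt (t^2 - 4)) / 2
noncomputable def muv (t : ℝ) : ℝ := (t - Real.sqrt (t^2 - 4)) / 2

lemma lam_facts {t : ℝ} (ht : 3 ≤ t) :
    lamv t * muv t = 1 ∧ lamv t + muv t = t ∧ 1 < lamv t ∧ 0 < muv t ∧ muv t < 1 := by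
  have h4 : (0:ℝ) ≤ t^2 - 4 := by nlinarith
  have hsq : Real.sqrt (t^2-4) ^ 2 = t^2 - 4 := Real.sq_sqrt h4
  have h2 : (2:ℝ) ≤ Real.sqrt (t^2-4) := by
    have : (4:ℝ) ≤ t^2 - 4 := by nlinarith
    nlinarith [Real.sqrt_nonneg (t^2-4), hsq]
  have hmul : lamv t * muv t = 1 := by
    unfold lamv muv; nlinarith [hsq]
  have hlam : 1 < lamv t := by unfold lamv; nlinarith
  have hmu : 0 < muv t := by
    nlinarith [hmul, hlam]
  refine ⟨hmul, by unfold lamv muv; ring, hlam, hmu, ?_⟩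
  nlinarith [hmul, hlam, hmu]

lemma aux_scalar (t : ℝ) (ht : 3 ≤ t) (x : ℕ → ℝ) (hx0 : 1 ≤ x 0)
    (hmono : ∀ k, x k ≤ x (k+1))
    (hrec : ∀ k, x (k+2) = t * x (k+1) - x k) :
    ∃ c : ℝ, Tendsto (fun k : ℕ => Real.log (x k) - k * Real.log (lamv t)) atTop (nhds c) := by
  obtain ⟨hmul, hsum, hlam, hmu, hmu1⟩ := lam_facts ht
  set lam := lamv t
  set mu := muv t
  have hlm : 0 < lam - mu := by nlinarith
  set A : ℝ := (x 1 - mu * x 0) / (lam - mu) with hA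
  set B : ℝ := (lam * x 0 - x 1) / (lam - mu) with hB
  have hApos : 0 < A := by
    apply div_pos _ hlm
    have := hmono 0
    nlinarith
  -- closed form
  have hclosed : ∀ k, x k = A * lam ^ k + B * mu ^ k := by
    have key : ∀ k, x k = A * lam ^ k + B * mu ^ k ∧ x (k+1) = A * lam ^ (k+1) + B * mu ^ (k+1) := by
      intro k
      have hne : lam - mu ≠ 0 := ne_of_gt hlm
      induction k with
      | zero =>
        constructor
        · rw [pow_zero, pow_zero, hA, hB]; field_simp; ring
        · rw [pow_one, pow_one, hA, hB]; field_simp; ring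
      | succ n ih =>
        refine ⟨ih.2, ?_⟩
        have h2 : x (n+1+1) = t * x (n+1) - x n := hrec n
        rw [h2, ih.1, ih.2, ← hsum]
        linear_combination (A * lam ^ n + B * mu ^ n) * hmul
    exact fun k => (key k).1
  -- g k := x k / lam ^ k tends to A
  have hxpos : ∀ k, 0 < x k := by
    intro k
    have : (1:ℝ) ≤ x k := by
      induction k with
      | zero => exact hx0
      | succ n ih => exact ih.trans (hmono n)
    linarith
  have hlpos : (0:ℝ) < lam := by linarith
  have hratio : mu / lam < 1 := by
    rw [div_lt_one hlpos]; linarith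
  have hratio0 : 0 ≤ mu / lam := le_of_lt (div_pos hmu hlpos)
  have hg : Tendsto (fun k : ℕ => x k / lam ^ k) atTop (nhds A) := by
    have heq : ∀ k : ℕ, x k / lam ^ k = A + B * (mu/lam) ^ k := by
      intro k
      rw [hclosed k, div_pow]
      field_simp
    simp only [heq]
    have : Tendsto (fun k : ℕ => (mu/lam) ^ k) atTop (nhds 0) :=
      tendsto_pow_atTop_nhds_zero_of_lt_one hratio0 hratio
    have := (this.const_mul B).const_add A
    simpa using this
  refine ⟨Real.log A, ?_⟩
  have : Tendsto (fun k : ℕ => Real.log (x k / lam ^ k)) atTop (nhds (Real.log A)) :=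
    ((Real.continuousAt_log (ne_of_gt hApos)).tendsto.comp hg)
  refine this.congr fun k => ?_
  rw [Real.log_div (ne_of_gt (hxpos k)) (ne_of_gt (pow_pos hlpos k)), Real.log_pow]


lemma aux_residue (S N0 Lr c : ℝ) (hS : 0 < S) (u : ℕ → ℝ)
    (hu : Tendsto (fun k : ℕ => u k - k * Lr) atTop (nhds c)) :
    Tendsto (fun k : ℕ => u k / (N0 + k * S)) atTop (nhds (Lr / S)) := by
  have hk : Tendsto (fun k : ℕ => (k:ℝ)) atTop atTop := tendsto_natCast_atTop_atTop
  have h1 : Tendsto (fun k : ℕ => (u k - k * Lr) / k) atTop (nhds 0) :=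
    hu.div_atTop hk
  have h2 : Tendsto (fun k : ℕ => N0 / k) atTop (nhds 0) :=
    (tendsto_const_nhds).div_atTop hk
  have h3 : Tendsto (fun k : ℕ => ((u k - k * Lr) / k + Lr) / (N0 / k + S))
      atTop (nhds (Lr / S)) := by
    have := Tendsto.div (h1.add_const Lr) (h2.add_const S) (by positivity)
    rw [zero_add, zero_add] at this; exact this
  refine h3.congr' ?_
  filter_upwards [eventually_ge_atTop 1] with k hk1
  have hkne : (k:ℝ) ≠ 0 := by positivity
  field_simp
  ring

lemma aux_combine (d : ℕ) (hd : 0 < d) (m₀ : ℕ) (f : ℕ → ℝ) (L : ℝ)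
    (h : ∀ r < d, Tendsto (fun k : ℕ => f (m₀ + r + d * k)) atTop (nhds L)) :
    Tendsto f atTop (nhds L) := by
  rw [Metric.tendsto_atTop]
  intro ε hε
  have h' : ∀ r : ℕ, r < d → ∃ K : ℕ, ∀ k ≥ K, dist (f (m₀ + r + d * k)) L < ε := by
    intro r hr
    exact (Metric.tendsto_atTop.1 (h r hr)) ε hε
  choose K hK using h'
  classical
  set Kmax : ℕ := (Finset.range d).sup (fun r => if hr : r < d then K r hr else 0) with hKmax
  refine ⟨m₀ + d * Kmax + d, fun m hm => ?_⟩
  obtain ⟨k, r, hrd, hm'⟩ : ∃ k r, r < d ∧ m = m₀ + r + d * k :=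
    ⟨(m - m₀) / d, (m - m₀) % d, Nat.mod_lt _ hd, by have := Nat.div_add_mod (m - m₀) d; omega⟩
  have hkK : Kmax ≤ k := by
    have h1 : d * Kmax < d * k := by omega
    exact le_of_lt (Nat.lt_of_mul_lt_mul_left h1)
  have hKr : K r hrd ≤ Kmax := by
    have : (if hr : r < d then K r hr else 0) ≤ Kmax :=
      Finset.le_sup (f := fun r => if hr : r < d then K r hr else 0) (Finset.mem_range.2 hrd)
    simpa [hrd] using this
  rw [hm']
  exact hK r hrd k (le_trans hKr hkK)

variable (a : ℕ → ℤ)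

def Mtx (i : ℕ) : Matrix (Fin 2) (Fin 2) ℤ := !![a i, 1; 1, 0]

def Ftx (m : ℕ) : ℕ → Matrix (Fin 2) (Fin 2) ℤ
  | 0 => 1
  | k+1 => Mtx a (m+k+1) * Ftx m k

def vtx (m : ℕ) : Fin 2 → ℤ := ![qConv a (m+1), qConv a m]

lemma vstep (m : ℕ) : vtx a (m+1) = Mtx a (m+1) *ᵥ vtx a m := by
  funext i
  fin_cases i <;>
    simp [vtx, Mtx, qConv, mulVec, dotProduct, Fin.sum_univ_two]

lemma vF (k m : ℕ) : vtx a (m+k) = Ftx a m k *ᵥ vtx a m := by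
  induction k with
  | zero => simp [Ftx]
  | succ n ih =>
    have : m + (n+1) = (m+n) + 1 := by ring
    rw [this, vstep, ih, Ftx, ← mulVec_mulVec]

section QFacts
variable (ha : ∀ m, 1 ≤ m → 1 ≤ a m)
include ha

lemma qConv_nonneg : ∀ n, 0 ≤ qConv a n := by
  intro n
  induction n using Nat.strong_induction_on with
  | _ n ih =>
    match n with
    | 0 => simp [qConv]
    | 1 => simp [qConv]
    | (n+2) =>
      have h1 := ih (n+1) (by omega)
      have h0 := ih n (by omega)
      have := ha (n+1) (by omega)
      simp only [qConv]
      nlinarith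

lemma qConv_one_le : ∀ n, 1 ≤ n → 1 ≤ qConv a n := by
  intro n
  induction n using Nat.strong_induction_on with
  | _ n ih =>
    match n with
    | 0 => omega
    | 1 => intro _; simp [qConv]
    | (n+2) =>
      intro _
      have h1 := ih (n+1) (by omega) (by omega)
      have h0 := qConv_nonneg a ha n
      have := ha (n+1) (by omega)
      simp only [qConv]
      nlinarith

lemma qConv_mono (n : ℕ) : qConv a (n+1) ≤ qConv a (n+2) := by
  have h1 := qConv_one_le a ha (n+1) (by omega)
  have h0 := qConv_nonneg a ha n
  have := ha (n+1) (by omega)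
  simp only [qConv]
  nlinarith

end QFacts

-- Cayley–Hamilton for 2x2 integer matrices
lemma CH2 (A : Matrix (Fin 2) (Fin 2) ℤ) :
    A * A = (Matrix.trace A) • A - (A.det) • (1 : Matrix (Fin 2) (Fin 2) ℤ) := by
  ext i j
  simp only [Matrix.mul_apply, Matrix.sub_apply, Matrix.smul_apply, smul_eq_mul,
    Matrix.trace, Matrix.diag, Fin.sum_univ_two, Matrix.det_fin_two, Matrix.one_apply]
  fin_cases i <;> fin_cases j <;> simp <;> ring

lemma det_Mtx (i : ℕ) : (Mtx a i).det = -1 := by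
  simp [Mtx, Matrix.det_fin_two_of]

lemma det_Ftx (m k : ℕ) : (Ftx a m k).det = (-1)^k := by
  induction k with
  | zero => simp [Ftx]
  | succ n ih => rw [Ftx, Matrix.det_mul, det_Mtx, ih]; ring

-- entries positivity
lemma Ftx_entries (ha : ∀ m, 1 ≤ m → 1 ≤ a m) (m k : ℕ) :
    (∀ i j, 0 ≤ Ftx a m k i j) ∧ (1 ≤ k → ∀ j, 1 ≤ Ftx a m k 0 j) ∧
      (2 ≤ k → ∀ j, 1 ≤ Ftx a m k 1 j) := by
  induction k with
  | zero =>
    refine ⟨fun i j => ?_, by omega, by omega⟩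
    fin_cases i <;> fin_cases j <;> simp [Ftx, Matrix.one_apply]
  | succ n ih =>
    obtain ⟨h0, h1, h2⟩ := ih
    have hM : ∀ j, Ftx a m (n+1) 0 j
        = a (m+n+1) * Ftx a m n 0 j + Ftx a m n 1 j := by
      intro j
      show (Mtx a (m+n+1) * Ftx a m n) 0 j = _
      simp [Mtx, Matrix.mul_apply, Fin.sum_univ_two]
    have hM1 : ∀ j, Ftx a m (n+1) 1 j = Ftx a m n 0 j := by
      intro j
      show (Mtx a (m+n+1) * Ftx a m n) 1 j = _
      simp [Mtx, Matrix.mul_apply, Fin.sum_univ_two]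
    have hA : 1 ≤ a (m+n+1) := ha _ (by omega)
    refine ⟨?_, ?_, ?_⟩
    · simp only [Fin.forall_fin_two]
      refine ⟨⟨?_, ?_⟩, ?_, ?_⟩
      · rw [hM]; nlinarith [h0 0 0, h0 1 0]
      · rw [hM]; nlinarith [h0 0 1, h0 1 1]
      · rw [hM1]; exact h0 0 0
      · rw [hM1]; exact h0 0 1
    · intro _ j
      rw [hM]
      rcases Nat.eq_zero_or_pos n with hn | hn
      · subst hn
        have e0 : Ftx a m 0 0 j = (1 : Matrix (Fin 2) (Fin 2) ℤ) 0 j := rfl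
        have e1 : Ftx a m 0 1 j = (1 : Matrix (Fin 2) (Fin 2) ℤ) 1 j := rfl
        rw [e0, e1]
        fin_cases j <;> simp [Matrix.one_apply] <;> nlinarith
      · nlinarith [h1 hn j, h0 1 j]
    · intro hn2 j
      have hn : 1 ≤ n := by omega
      rw [hM1]; exact h1 hn j

def Minv (i : ℕ) : Matrix (Fin 2) (Fin 2) ℤ := !![0, 1; 1, -(a i)]

lemma Mtx_Minv (i : ℕ) : Mtx a i * Minv a i = 1 := by
  ext x y
  simp only [Mtx, Minv, Matrix.mul_apply, Fin.sum_univ_two]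
  fin_cases x <;> fin_cases y <;> simp

lemma Minv_Mtx (i : ℕ) : Minv a i * Mtx a i = 1 := by
  ext x y
  simp only [Mtx, Minv, Matrix.mul_apply, Fin.sum_univ_two]
  fin_cases x <;> fin_cases y <;> simp

lemma Ftx_comm (m k : ℕ) : Ftx a (m+1) k * Mtx a (m+1) = Mtx a (m+k+1) * Ftx a m k := by
  induction k with
  | zero => simp [Ftx]
  | succ n ih =>
    show Mtx a (m+1+n+1) * Ftx a (m+1) n * Mtx a (m+1) = Mtx a (m+(n+1)+1) * (Mtx a (m+n+1) * Ftx a m n)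
    rw [mul_assoc, ih, ← mul_assoc, ← mul_assoc,
      show m+1+n+1 = m+(n+1)+1 from by omega]

-- trace step
lemma trace_step (m k : ℕ) (hM : Mtx a (m+k+1) = Mtx a (m+1)) :
    Matrix.trace (Ftx a (m+1) k) = Matrix.trace (Ftx a m k) := by
  have h := Ftx_comm a m k
  rw [hM] at h
  have h2 : Ftx a (m+1) k = Mtx a (m+1) * Ftx a m k * Minv a (m+1) := by
    have := congrArg (· * Minv a (m+1)) h
    simpa [mul_assoc, Mtx_Minv] using this
  rw [h2, Matrix.trace_mul_comm, ← mul_assoc, Minv_Mtx, one_mul]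

-- periodicity of the transfer matrix
lemma Ftx_shift (m d k : ℕ) (hper : ∀ i, m < i → i ≤ m + k → a (i + d) = a i) :
    Ftx a (m + d) k = Ftx a m k := by
  induction k with
  | zero => rfl
  | succ n ih =>
    have ih' := ih (fun i h1 h2 => hper i h1 (by omega))
    show Mtx a (m+d+n+1) * Ftx a (m+d) n = Mtx a (m+n+1) * Ftx a m n
    rw [ih']
    congr 1
    unfold Mtx
    rw [show m + d + n + 1 = (m + n + 1) + d by ring, hper (m+n+1) (by omega) (by omega)]

lemma Mtx_def (a : ℕ → ℤ) (i : ℕ) : Mtx a i = !![a i, 1; 1, 0] := rfl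

lemma vtx_def (a : ℕ → ℤ) (m : ℕ) : vtx a m = ![qConv a (m+1), qConv a m] := rfl

end Aux

theorem stmt12 (a : ℕ → ℤ) (ha0 : 0 ≤ a 0) (ha : ∀ m, 1 ≤ m → 1 ≤ a m)
    (p l : ℕ) (hl : 1 ≤ l) (hper : ∀ m, p < m → a (m + l) = a m) :
    ∃ L : ℝ, Filter.Tendsto
      (fun m : ℕ => Real.log ((qConv a (m + 1) : ℤ) : ℝ) / ((Nsum a m : ℤ) : ℝ))
      Filter.atTop (nhds L) := by
  classical
  set d := 2 * l with hd_def
  have hd : 0 < d := by omega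
  have hd2 : 2 ≤ d := by omega
  have hper2 : ∀ i, p < i → a (i + d) = a i := by
    intro i hi
    have h1 : a (i + l + l) = a (i + l) := hper (i + l) (by omega)
    have h2 : a (i + l) = a i := hper i hi
    rw [show i + d = i + l + l from by omega, h1, h2]
  -- shift invariance of the transfer matrix
  have hPshift : ∀ m, p ≤ m → Ftx a (m + d) d = Ftx a m d := by
    intro m hm
    exact Ftx_shift a m d d (fun i h1 _ => hper2 i (by omega))
  -- trace is constant from p on
  set t : ℤ := Matrix.trace (Ftx a p d) with ht_def
  have htrace : ∀ m, p ≤ m → Matrix.trace (Ftx a m d) = t := by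
    intro m hm
    induction m, hm using Nat.le_induction with
    | base => rfl
    | succ n hn ih =>
      rw [← ih]
      apply trace_step
      rw [Mtx_def, Mtx_def, show n + d + 1 = (n + 1) + d from by omega,
        hper2 (n+1) (by omega)]
  -- 3 ≤ t
  have ht3 : (3:ℤ) ≤ t := by
    obtain ⟨h0, h1, h2⟩ := Ftx_entries a ha p d
    have e00 := h1 (by omega) 0
    have e01 := h1 (by omega) 1
    have e10 := h2 (by omega) 0
    have e11 := h2 (by omega) 1
    have hdet : (Ftx a p d).det = 1 := by
      rw [det_Ftx, hd_def, pow_mul]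
      norm_num
    rw [Matrix.det_fin_two] at hdet
    rw [ht_def, Matrix.trace_fin_two]
    nlinarith
  -- determinant is 1
  have hdet1 : ∀ m, (Ftx a m d).det = 1 := by
    intro m
    rw [det_Ftx, hd_def, pow_mul]
    norm_num
  -- key recurrence
  have hkey : ∀ m, p ≤ m →
      qConv a (m + 2*d + 1) = t * qConv a (m + d + 1) - qConv a (m + 1) := by
    intro m hm
    have hv1 : vtx a (m + 2*d) = Ftx a m d *ᵥ (Ftx a m d *ᵥ vtx a m) := by
      have e1 : vtx a ((m + d) + d) = Ftx a (m+d) d *ᵥ vtx a (m+d) := vF a d (m+d)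
      rw [show m + 2*d = (m + d) + d from by ring, e1, hPshift m hm, vF a d m]
    rw [Matrix.mulVec_mulVec, CH2, htrace m hm, hdet1 m, one_smul,
      Matrix.sub_mulVec, Matrix.smul_mulVec, ← vF a d m, Matrix.one_mulVec] at hv1
    have := congrFun hv1 0
    rw [vtx_def, vtx_def] at this
    simp only [Pi.sub_apply, Pi.smul_apply, smul_eq_mul] at this
    rw [show m + 2*d + 1 = (m + 2*d) + 1 from rfl]
    rw [vtx_def] at this
    simpa [Matrix.cons_val_zero] using this
  -- Nsum facts
  have hNsucc : ∀ m, Nsum a (m+1) = Nsum a m + a (m+1) := by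
    intro m
    simp [Nsum, Finset.sum_range_succ]
  set S : ℤ := Nsum a (p + d) - Nsum a p with hS_def
  have hNstep : ∀ m, p ≤ m → Nsum a (m + d) = Nsum a m + S := by
    intro m hm
    induction m, hm using Nat.le_induction with
    | base => ring
    | succ n hn ih =>
      rw [show n + 1 + d = (n + d) + 1 from by omega, hNsucc, ih, hNsucc]
      rw [show n + d + 1 = (n + 1) + d from by omega, hper2 (n+1) (by omega)]
      ring
  have hSge : (d:ℤ) ≤ S := by
    have key : ∀ k : ℕ, Nsum a p + k ≤ Nsum a (p + k) := by
      intro k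
      induction k with
      | zero => simp
      | succ n ih =>
        have : 1 ≤ a (p + n + 1) := ha _ (by omega)
        rw [show p + (n+1) = (p + n) + 1 from by omega, hNsucc]
        push_cast
        omega
    have := key d
    omega
  have hSpos : (0:ℝ) < (S:ℝ) := by
    have : (0:ℤ) < S := by omega
    exact_mod_cast this
  -- real trace
  have ht3R : (3:ℝ) ≤ (t:ℝ) := by exact_mod_cast ht3
  -- monotonicity of qConv across many steps
  have qmono : ∀ n k : ℕ, qConv a (n+1) ≤ qConv a (n+k+1) := by
    intro n k
    induction k with
    | zero => simp
    | succ j ih =>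
      calc qConv a (n+1) ≤ qConv a (n+j+1) := ih
        _ ≤ qConv a (n+j+2) := qConv_mono a ha (n+j)
        _ = qConv a (n+(j+1)+1) := by rw [show n+(j+1)+1 = n+j+2 from by omega]
  refine ⟨Real.log (lamv (t:ℝ)) / (S:ℝ), ?_⟩
  apply aux_combine d hd p
  intro r hr
  -- the residue-class subsequence
  set x : ℕ → ℝ := fun k => ((qConv a (p + r + d*k + 1) : ℤ) : ℝ) with hx_def
  have hx0 : 1 ≤ x 0 := by
    have := qConv_one_le a ha (p + r + d*0 + 1) (by omega)
    simp only [hx_def]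
    exact_mod_cast this
  have hxmono : ∀ k, x k ≤ x (k+1) := by
    intro k
    have := qmono (p + r + d*k) d
    rw [show p + r + d*k + d + 1 = p + r + d*(k+1) + 1 from by ring] at this
    simp only [hx_def]
    exact_mod_cast this
  have hxrec : ∀ k, x (k+2) = (t:ℝ) * x (k+1) - x k := by
    intro k
    have h := hkey (p + r + d*k) (by omega)
    rw [show p + r + d*k + 2*d + 1 = p + r + d*(k+2) + 1 from by ring,
      show p + r + d*k + d + 1 = p + r + d*(k+1) + 1 from by ring] at h
    simp only [hx_def]
    exact_mod_cast h
  obtain ⟨c, hc⟩ := aux_scalar (t:ℝ) ht3R x hx0 hxmono hxrec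
  -- Nsum along the residue class
  have hNres : ∀ k : ℕ, (Nsum a (p + r + d*k) : ℝ) = (Nsum a (p+r) : ℤ) + k * (S:ℝ) := by
    intro k
    induction k with
    | zero => simp
    | succ n ih =>
      rw [show p + r + d*(n+1) = (p + r + d*n) + d from by ring, hNstep _ (by omega)]
      push_cast
      push_cast at ih
      rw [ih]
      ring
  have hmain := aux_residue (S:ℝ) ((Nsum a (p+r) : ℤ) : ℝ) (Real.log (lamv (t:ℝ))) c hSpos
    (fun k => Real.log (x k)) hc
  refine hmain.congr fun k => ?_
  rw [hx_def]
  simp only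
  rw [hNres k]
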